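/- The TM equation of state satisfies the admissibility conditions: the function h(p,ρ) = 5p/(2ρ) + √(1 + (9/4)(p/ρ)²) on (0,∞)×(0,∞) satisfies, for all p, ρ > 0: (heq1) h(p,ρ) ≥ √(1 + p²/ρ²) + p/ρ, and (heq2) h(p,ρ)·(1/ρ − ∂h/∂p(p,ρ)) < ∂h/∂ρ(p,ρ) < 0. -/

import Mathlib

noncomputable section

/-- The TM EOS `h(p,ρ) = 5p/(2ρ) + √(1 + (9/4)(p/ρ)²)`. -/
def hTM (p ρ : ℝ) : ℝ := 5 * p / (2 * ρ) + Real.sqrt (1 + (9 / 4) * (p / ρ) ^ 2)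

/-- The TM EOS satisfies (heq1) and (heq2). -/
theorem tmEOS_admissible (p ρ : ℝ) (hp : 0 < p) (hρ : 0 < ρ) :
    Real.sqrt (1 + p ^ 2 / ρ ^ 2) + p / ρ ≤ hTM p ρ ∧
    hTM p ρ * (1 / ρ - deriv (fun p' => hTM p' ρ) p) < deriv (fun ρ' => hTM p ρ') ρ ∧
    deriv (fun ρ' => hTM p ρ') ρ < 0 := by
  have hρ' : ρ ≠ 0 := ne_of_gt hρ
  have harg : (0:ℝ) < 1 + (9 / 4) * (p / ρ) ^ 2 := by positivity
  set s := Real.sqrt (1 + (9 / 4) * (p / ρ) ^ 2) with hs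
  have hspos : 0 < s := Real.sqrt_pos.mpr harg
  have hs2 : s ^ 2 = 1 + (9 / 4) * (p / ρ) ^ 2 := Real.sq_sqrt harg.le
  have hs2' : 4 * ρ ^ 2 * s ^ 2 = 4 * ρ ^ 2 + 9 * p ^ 2 := by
    rw [hs2]
    field_simp
  -- derivative in p
  have hdp : HasDerivAt (fun p' => hTM p' ρ) (5 / (2 * ρ) + 9 / 4 * p / (ρ ^ 2 * s)) p := by
    unfold hTM
    have h1 : HasDerivAt (fun p' : ℝ => 5 * p' / (2 * ρ)) (5 / (2 * ρ)) p := by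
      simpa using ((hasDerivAt_id p).const_mul 5).div_const (2 * ρ)
    have h2 : HasDerivAt (fun p' : ℝ => 1 + (9 / 4) * (p' / ρ) ^ 2)
        ((9 / 4) * ((2 : ℕ) * (p / ρ) ^ 1 * (1 / ρ))) p := by
      have := ((((hasDerivAt_id p).div_const ρ).pow 2).const_mul (9 / 4)).const_add 1
      simpa using this
    have h3 := (Real.hasDerivAt_sqrt harg.ne').comp p h2
    have h4 := h1.add h3
    convert h4 using 1
    case e'_4 => rfl
    case e'_5 => rfl
    case e'_8 => rfl
    rw [← hs]
    field_simp
    ring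
  -- derivative in ρ
  have hdρ : HasDerivAt (fun ρ' => hTM p ρ')
      (-(5 * p / (2 * ρ ^ 2)) - 9 / 4 * p ^ 2 / (ρ ^ 3 * s)) ρ := by
    unfold hTM
    have h0 : HasDerivAt (fun ρ' : ℝ => 2 * ρ') 2 ρ := by
      simpa using (hasDerivAt_id ρ).const_mul 2
    have h1 : HasDerivAt (fun ρ' : ℝ => 5 * p / (2 * ρ'))
        ((0 * (2 * ρ) - 5 * p * 2) / (2 * ρ) ^ 2) ρ :=
      (hasDerivAt_const ρ (5 * p)).div h0 (by positivity)
    have hinner : HasDerivAt (fun ρ' : ℝ => p / ρ') ((0 * ρ - p * 1) / ρ ^ 2) ρ :=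
      (hasDerivAt_const ρ p).div (hasDerivAt_id ρ) hρ'
    have h2 : HasDerivAt (fun ρ' : ℝ => 1 + (9 / 4) * (p / ρ') ^ 2)
        ((9 / 4) * ((2 : ℕ) * (p / ρ) ^ 1 * ((0 * ρ - p * 1) / ρ ^ 2))) ρ := by
      have := ((hinner.pow 2).const_mul (9 / 4)).const_add 1
      simpa using this
    have h3 := (Real.hasDerivAt_sqrt harg.ne').comp ρ h2
    have h4 := h1.add h3
    convert h4 using 1
    case e'_4 => rfl
    case e'_5 => rfl
    case e'_8 => rfl
    rw [← hs]
    field_simp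
    ring
  rw [hdp.deriv, hdρ.deriv]
  refine ⟨?_, ?_, ?_⟩
  · -- heq1
    have h1 : Real.sqrt (1 + p ^ 2 / ρ ^ 2) ≤ s := by
      rw [hs]
      apply Real.sqrt_le_sqrt
      have : p ^ 2 / ρ ^ 2 = (p / ρ) ^ 2 := by field_simp
      rw [this]
      nlinarith [sq_nonneg (p / ρ)]
    have h2 : p / ρ ≤ 5 * p / (2 * ρ) := by
      rw [div_le_div_iff₀ hρ (by positivity)]
      nlinarith
    show _ ≤ 5 * p / (2 * ρ) + s
    linarith
  · -- heq2 first inequality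
    show (5 * p / (2 * ρ) + s) * _ < _
    rw [← sub_pos]
    have key : -(5 * p / (2 * ρ ^ 2)) - 9 / 4 * p ^ 2 / (ρ ^ 3 * s) -
        (5 * p / (2 * ρ) + s) * (1 / ρ - (5 / (2 * ρ) + 9 / 4 * p / (ρ ^ 2 * s))) =
        (7 / 2 * (p / ρ) + 3 / 2 * s + 27 / 8 * (p / ρ) ^ 2 / s) / ρ := by
      field_simp
      ring
    rw [key]
    positivity
  · -- h_ρ < 0
    have h1 : 0 < 5 * p / (2 * ρ ^ 2) := by positivity
    have h2 : 0 < 9 / 4 * p ^ 2 / (ρ ^ 3 * s) := by positivity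
    linarith
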